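/- Let τ be the first positive solution of tan(τ) = τ. For a > 0, the Jacobian determinant of the endpoint map E(a,t) = ((1/a) sin(at), t/(2a) − sin(2at)/(4a²)) of Grushin geodesics from the origin vanishes at t = τ/a; i.e., ∂(x,y)/∂(a,t) evaluated at (a, τ/a) is zero, so the first conjugate time along the geodesic with parameter a is τ/a. -/

import Mathlib

open Real ContinuousLinearMap

lemma det_zero_of_kernel (D : ℝ × ℝ →L[ℝ] ℝ × ℝ) (m : ℝ × ℝ) (hm : m ≠ 0)
    (h : D m = 0) : D.det = 0 := by
  have hiff := (LinearMap.hasEigenvalue_zero_tfae (D : ℝ × ℝ →ₗ[ℝ] ℝ × ℝ)).out 3 5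
  exact hiff.mpr ⟨m, hm, h⟩

/-- Let τ be the first positive root of tan τ = τ. The Jacobian determinant of
the Grushin endpoint map E(a,t) = ((1/a) sin(at), t/(2a) − sin(2at)/(4a²))
vanishes at (a, τ/a) for every a > 0: the first conjugate time is τ/a. -/
theorem stmt5 (τ : ℝ) (hτ : 0 < τ) (htan : Real.tan τ = τ)
    (hfirst : ∀ s : ℝ, 0 < s → s < τ → Real.tan s ≠ s)
    (a : ℝ) (ha : 0 < a) :
    (fderiv ℝ (fun p : ℝ × ℝ =>
        ((Real.sin (p.1 * p.2) / p.1 : ℝ),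
          (p.2 / (2 * p.1) - Real.sin (2 * p.1 * p.2) / (4 * p.1 ^ 2) : ℝ)))
      (a, τ / a)).det = 0 := by
  have ha' : a ≠ 0 := ne_of_gt ha
  have hcos : Real.cos τ ≠ 0 := by
    intro h
    rw [Real.tan_eq_sin_div_cos, h, div_zero] at htan
    exact hτ.ne htan
  have hsin : Real.sin τ = τ * Real.cos τ := by
    rw [Real.tan_eq_sin_div_cos, div_eq_iff hcos] at htan
    exact htan
  set p : ℝ × ℝ := (a, τ / a) with hp
  have hpt : p.1 * p.2 = τ := by
    show a * (τ / a) = τ; field_simp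
  have h2pt : 2 * p.1 * p.2 = 2 * τ := by
    show 2 * a * (τ / a) = 2 * τ; field_simp
  -- derivative of the product map
  have hm : HasFDerivAt (fun q : ℝ × ℝ => q.1 * q.2)
      (p.1 • ContinuousLinearMap.snd ℝ ℝ ℝ + p.2 • ContinuousLinearMap.fst ℝ ℝ ℝ) p :=
    hasFDerivAt_fst.mul hasFDerivAt_snd
  have hA : HasFDerivAt (fun q : ℝ × ℝ => Real.sin (q.1 * q.2))
      (Real.cos (p.1 * p.2) • (p.1 • ContinuousLinearMap.snd ℝ ℝ ℝ +
        p.2 • ContinuousLinearMap.fst ℝ ℝ ℝ)) p :=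
    by have := (Real.hasDerivAt_sin (p.1 * p.2)).comp_hasFDerivAt p hm; exact this
  have hB : HasFDerivAt (fun q : ℝ × ℝ => (q.1)⁻¹)
      ((-(a ^ 2)⁻¹) • ContinuousLinearMap.fst ℝ ℝ ℝ) p :=
    (hasDerivAt_inv ha').comp_hasFDerivAt p hasFDerivAt_fst
  have hX := hA.mul hB
  -- second component pieces
  have h2a1 : HasFDerivAt (fun q : ℝ × ℝ => 2 * q.1)
      ((2 : ℝ) • ContinuousLinearMap.fst ℝ ℝ ℝ) p :=
    hasFDerivAt_fst.const_mul 2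
  have h2ne : (2 : ℝ) * a ≠ 0 := by positivity
  have hC : HasFDerivAt (fun q : ℝ × ℝ => (2 * q.1)⁻¹)
      ((-((2 * a) ^ 2)⁻¹) • ((2 : ℝ) • ContinuousLinearMap.fst ℝ ℝ ℝ)) p :=
    (hasDerivAt_inv h2ne).comp_hasFDerivAt p h2a1
  have h2a := hasFDerivAt_snd.mul hC
  have hmm : HasFDerivAt (fun q : ℝ × ℝ => 2 * q.1 * q.2)
      ((2 * p.1) • ContinuousLinearMap.snd ℝ ℝ ℝ +
        p.2 • ((2 : ℝ) • ContinuousLinearMap.fst ℝ ℝ ℝ)) p :=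
    h2a1.mul hasFDerivAt_snd
  have hS2 : HasFDerivAt (fun q : ℝ × ℝ => Real.sin (2 * q.1 * q.2))
      (Real.cos (2 * p.1 * p.2) • ((2 * p.1) • ContinuousLinearMap.snd ℝ ℝ ℝ +
        p.2 • ((2 : ℝ) • ContinuousLinearMap.fst ℝ ℝ ℝ))) p :=
    by have := (Real.hasDerivAt_sin (2 * p.1 * p.2)).comp_hasFDerivAt p hmm; exact this
  have hq2 : HasFDerivAt (fun q : ℝ × ℝ => 4 * (q.1 * q.1))
      ((4 : ℝ) • (p.1 • ContinuousLinearMap.fst ℝ ℝ ℝ +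
        p.1 • ContinuousLinearMap.fst ℝ ℝ ℝ)) p :=
    (hasFDerivAt_fst.mul hasFDerivAt_fst).const_mul 4
  have h4ne : (4 : ℝ) * (a * a) ≠ 0 := by positivity
  have hD : HasFDerivAt (fun q : ℝ × ℝ => (4 * (q.1 * q.1))⁻¹)
      ((-((4 * (a * a)) ^ 2)⁻¹) • ((4 : ℝ) • (p.1 • ContinuousLinearMap.fst ℝ ℝ ℝ +
        p.1 • ContinuousLinearMap.fst ℝ ℝ ℝ))) p :=
    (hasDerivAt_inv h4ne).comp_hasFDerivAt p hq2
  have h2b := hS2.mul hD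
  have h2 := h2a.sub h2b
  have hF := HasFDerivAt.prodMk hX h2
  have hfg : (fun q : ℝ × ℝ =>
        ((Real.sin (q.1 * q.2) / q.1 : ℝ),
          (q.2 / (2 * q.1) - Real.sin (2 * q.1 * q.2) / (4 * q.1 ^ 2) : ℝ)))
      = fun q : ℝ × ℝ =>
        (Real.sin (q.1 * q.2) * (q.1)⁻¹,
          q.2 * (2 * q.1)⁻¹ - Real.sin (2 * q.1 * q.2) * (4 * (q.1 * q.1))⁻¹) := by
    funext q
    simp only [div_eq_mul_inv, pow_two]
  rw [hfg, HasFDerivAt.fderiv (f := fun q : ℝ × ℝ => (Real.sin (q.1 * q.2) * (q.1)⁻¹,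
    q.2 * (2 * q.1)⁻¹ - Real.sin (2 * q.1 * q.2) * (4 * (q.1 * q.1))⁻¹)) hF]
  refine det_zero_of_kernel _ ((1 : ℝ), (0 : ℝ)) (by simp [Prod.ext_iff]) ?_
  simp [hpt, h2pt, ContinuousLinearMap.add_apply, ContinuousLinearMap.smul_apply,
    ContinuousLinearMap.sub_apply, ContinuousLinearMap.prod_apply, Prod.ext_iff]
  rw [Real.sin_two_mul, Real.cos_two_mul, hsin]
  constructor
  · simp only [hp]
    field_simp
    ring
  · simp only [hp]
    field_simp
    ring
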